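/- Let A(t), B(t), C(t), t ∈ [0,1], be three continuous injective curves in ℝ² with common endpoints A(0)=B(0)=C(0)=a and A(1)=B(1)=C(1)=b, where a ≠ b, and whose images pairwise intersect exactly in {a,b}. If C \ {a,b} is contained in the interior (bounded component of the complement) of the Jordan curve A ∪ B, then the interior of the Jordan curve B ∪ C is contained in the interior of A ∪ B. -/

import Mathlib

open Set Complex Metric Bornology Finset

lemma exists_clog_on_ball (f : ℂ → ℂ) (hf : ContinuousOn f (closedBall 0 1))
    (h0 : ∀ z ∈ closedBall (0:ℂ) 1, f z ≠ 0) :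
    ∃ h : ℂ → ℂ, ContinuousOn h (closedBall 0 1) ∧
      ∀ z ∈ closedBall (0:ℂ) 1, Complex.exp (h z) = f z := by
  have hD : IsCompact (closedBall (0:ℂ) 1) := isCompact_closedBall _ _
  -- minimum of ‖f‖
  obtain ⟨z₀, hz₀, hmin⟩ := hD.exists_isMinOn ⟨0, by simp⟩
    (continuous_norm.comp_continuousOn hf)
  set ε : ℝ := ‖f z₀‖ with hε
  have hεpos : 0 < ε := norm_pos_iff.2 (h0 _ hz₀)
  -- uniform continuity
  have huc := hD.uniformContinuousOn_of_continuous hf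
  rw [Metric.uniformContinuousOn_iff] at huc
  obtain ⟨δ, hδpos, hδ⟩ := huc ε hεpos
  obtain ⟨n, hn⟩ := exists_nat_one_div_lt hδpos
  set N : ℕ := n + 1 with hN
  have hNpos : (0:ℝ) < N := by positivity
  -- the scaled maps
  set g : ℕ → ℂ → ℂ := fun k z => f ((k / N : ℂ) * z) with hg
  have hmem : ∀ k : ℕ, k ≤ N → ∀ z ∈ closedBall (0:ℂ) 1, ((k / N : ℂ) * z) ∈ closedBall (0:ℂ) 1 := by
    intro k hk z hz
    simp only [mem_closedBall, dist_zero_right] at hz ⊢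
    have : ‖(k / N : ℂ)‖ ≤ 1 := by
      rw [norm_div]
      simp only [Complex.norm_natCast]
      rw [div_le_one hNpos]
      exact_mod_cast hk
    calc ‖(k / N : ℂ) * z‖ = ‖(k / N : ℂ)‖ * ‖z‖ := norm_mul _ _
      _ ≤ 1 * 1 := by exact mul_le_mul this hz (norm_nonneg _) zero_le_one
      _ = 1 := one_mul 1
  have hgne : ∀ k : ℕ, k ≤ N → ∀ z ∈ closedBall (0:ℂ) 1, g k z ≠ 0 := fun k hk z hz =>
    h0 _ (hmem k hk z hz)
  -- ratio in ball 1 1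
  have hratio : ∀ k : ℕ, k < N → ∀ z ∈ closedBall (0:ℂ) 1,
      g (k+1) z / g k z ∈ ball (1:ℂ) 1 := by
    intro k hk z hz
    have h1 : ((k+1 : ℕ) / N : ℂ) * z ∈ closedBall (0:ℂ) 1 := hmem _ hk z hz
    have h2 : ((k : ℕ) / N : ℂ) * z ∈ closedBall (0:ℂ) 1 := hmem _ (le_of_lt hk) z hz
    have hdist : dist (((k+1 : ℕ) / N : ℂ) * z) (((k : ℕ) / N : ℂ) * z) < δ := by
      have : (((k+1 : ℕ) / N : ℂ) * z) - (((k : ℕ) / N : ℂ) * z) = (1 / N : ℂ) * z := by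
        push_cast; ring
      rw [dist_eq_norm, this, norm_mul]
      have hz1 : ‖z‖ ≤ 1 := by simpa [dist_zero_right] using hz
      have : ‖(1 / N : ℂ)‖ = 1 / N := by
        rw [norm_div]; simp
      calc ‖(1 / N : ℂ)‖ * ‖z‖ ≤ (1 / N) * 1 := by
            rw [this]; exact mul_le_mul_of_nonneg_left hz1 (by positivity)
        _ = 1 / (n + 1 : ℝ) := by rw [mul_one]; norm_num [hN]
        _ < δ := hn
    have hlt : ‖g (k+1) z - g k z‖ < ε := by
      have := hδ _ h1 _ h2 hdist
      rwa [dist_eq_norm] at this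
    have hεle : ε ≤ ‖g k z‖ := hmin (hmem _ (le_of_lt hk) z hz)
    rw [mem_ball, dist_eq_norm]
    have hgkne : g k z ≠ 0 := hgne _ (le_of_lt hk) z hz
    have : g (k+1) z / g k z - 1 = (g (k+1) z - g k z) / g k z := by
      field_simp
    rw [this, norm_div, div_lt_one (norm_pos_iff.2 hgkne)]
    exact lt_of_lt_of_le hlt hεle
  have hball_slit : ball (1:ℂ) 1 ⊆ slitPlane := by
    intro w hw
    rw [mem_ball, dist_eq_norm] at hw
    left
    have : |w.re - 1| < 1 := lt_of_le_of_lt (by simpa using Complex.abs_re_le_norm (w - 1)) hw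
    have := abs_lt.1 this
    linarith [this.1]
  -- define h
  refine ⟨fun z => Complex.log (f 0) + ∑ k ∈ Finset.range N, Complex.log (g (k+1) z / g k z),
    ?_, ?_⟩
  · apply ContinuousOn.add continuousOn_const
    apply continuousOn_finset_sum
    intro k hk
    rw [Finset.mem_range] at hk
    have hck : ∀ m : ℕ, m ≤ N → ContinuousOn (g m) (closedBall (0:ℂ) 1) := by
      intro m hm
      exact hf.comp ((continuous_const.mul continuous_id).continuousOn) (fun z hz => hmem m hm z hz)
    refine ContinuousOn.clog ?_ (fun z hz => hball_slit (hratio k hk z hz))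
    exact (hck (k+1) hk).div (hck k (le_of_lt hk)) (fun z hz => hgne k (le_of_lt hk) z hz)
  · intro z hz
    rw [Complex.exp_add, Complex.exp_sum]
    have h00 : f 0 ≠ 0 := h0 0 (by simp)
    rw [Complex.exp_log h00]
    have : ∀ k ∈ Finset.range N, Complex.exp (Complex.log (g (k+1) z / g k z)) =
        g (k+1) z / g k z := by
      intro k hk
      rw [Finset.mem_range] at hk
      exact Complex.exp_log (div_ne_zero (hgne _ hk z hz) (hgne _ (le_of_lt hk) z hz))
    rw [Finset.prod_congr rfl this, Finset.prod_div_distrib]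
    have key : (∏ k ∈ Finset.range N, g (k+1) z) * g 0 z
        = (∏ k ∈ Finset.range N, g k z) * g N z := by
      have h1 := Finset.prod_range_succ' (fun k => g k z) N
      have h2 := Finset.prod_range_succ (fun k => g k z) N
      rw [← h1, h2]
    have hg0 : g 0 z = f 0 := by simp [hg]
    have hgN : g N z = f z := by
      have : ((N:ℂ) / N) = 1 := div_self (by exact_mod_cast hNpos.ne')
      simp [hg, this]
    have hPne : (∏ k ∈ Finset.range N, g k z) ≠ 0 :=
      Finset.prod_ne_zero_iff.2 (fun k hk => hgne k (le_of_lt (Finset.mem_range.1 hk)) z hz)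
    have hg0ne : g 0 z ≠ 0 := hgne 0 (Nat.zero_le _) z hz
    rw [← hg0, ← hgN]
    field_simp
    linear_combination key

lemma no_id_extension (f : ℂ → ℂ) (hf : ContinuousOn f (closedBall 0 1))
    (h0 : ∀ z ∈ closedBall (0:ℂ) 1, f z ≠ 0)
    (hid : ∀ z ∈ sphere (0:ℂ) 1, f z = z) : False := by
  obtain ⟨h, hh, hexp⟩ := exists_clog_on_ball f hf h0
  set e : ℝ → ℂ := fun t => Complex.exp (2 * Real.pi * Complex.I * t) with he
  have hesphere : ∀ t : ℝ, e t ∈ sphere (0:ℂ) 1 := by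
    intro t
    simp only [he, mem_sphere_iff_norm, sub_zero]
    rw [Complex.norm_exp]
    have : (2 * Real.pi * Complex.I * t).re = 0 := by
      simp [Complex.mul_re, Complex.mul_im]
    rw [this, Real.exp_zero]
  have heball : ∀ t : ℝ, e t ∈ closedBall (0:ℂ) 1 := fun t =>
    sphere_subset_closedBall (hesphere t)
  have hecont : Continuous e := by
    apply Complex.continuous_exp.comp
    exact (continuous_const.mul Complex.continuous_ofReal)
  set φ : ℝ → ℂ := fun t => h (e t) - 2 * Real.pi * Complex.I * t with hφ
  have hφcont : Continuous φ := by
    apply Continuous.sub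
    · exact hh.comp_continuous hecont heball
    · exact continuous_const.mul Complex.continuous_ofReal
  have hφone : ∀ t : ℝ, Complex.exp (φ t) = 1 := by
    intro t
    rw [hφ]
    simp only
    rw [Complex.exp_sub, hexp _ (heball t), hid _ (hesphere t), he]
    exact div_self (Complex.exp_ne_zero _)
  -- ψ : the normalized imaginary part
  set ψ : ℝ → ℝ := fun t => (φ t).im / (2 * Real.pi) with hψ
  have hψcont : Continuous ψ := (Complex.continuous_im.comp hφcont).div_const _
  have hψint : ∀ t : ℝ, ∃ m : ℤ, ψ t = m := by
    intro t
    obtain ⟨m, hm⟩ := Complex.exp_eq_one_iff.1 (hφone t)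
    refine ⟨m, ?_⟩
    rw [hψ]
    simp only
    rw [hm]
    have : ((m:ℂ) * (2 * Real.pi * Complex.I)).im = m * (2 * Real.pi) := by
      simp [Complex.mul_im]
    rw [this]
    field_simp [Real.pi_ne_zero]
  -- values at 0 and 1
  have he0 : e 0 = 1 := by simp [he]
  have he1 : e 1 = 1 := by
    simp only [he, Complex.ofReal_one, mul_one]
    exact Complex.exp_two_pi_mul_I
  have hψ10 : ψ 1 = ψ 0 - 1 := by
    rw [hψ]
    simp only [hφ, he0, he1]
    simp [Complex.sub_im, Complex.mul_im]
    field_simp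
  -- IVT contradiction
  obtain ⟨m0, hm0⟩ := hψint 0
  have hmid : ψ 0 - 1/2 ∈ Icc (ψ 1) (ψ 0) := by
    rw [hψ10]; constructor <;> linarith
  have := intermediate_value_Icc' (by norm_num : (0:ℝ) ≤ 1) hψcont.continuousOn hmid
  obtain ⟨t, _, ht⟩ := this
  obtain ⟨m, hm⟩ := hψint t
  rw [hm, hm0] at ht
  have : (2:ℝ) * m = 2 * m0 - 1 := by linarith
  have : (2 * m : ℤ) = 2 * m0 - 1 := by exact_mod_cast this
  omega

lemma closure_connectedComponentIn_inter {X : Type*} [TopologicalSpace X] {F : Set X} {x : X} :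
    closure (connectedComponentIn F x) ∩ F ⊆ connectedComponentIn F x := by
  by_cases hxF : x ∈ F
  · rintro y ⟨hyc, hyF⟩
    have hpre : IsPreconnected (connectedComponentIn F x ∪ {y}) := by
      apply isPreconnected_connectedComponentIn.subset_closure subset_union_left
      exact union_subset subset_closure (singleton_subset_iff.2 hyc)
    exact hpre.subset_connectedComponentIn
      (mem_union_left _ (mem_connectedComponentIn hxF))
      (union_subset (connectedComponentIn_subset _ _) (singleton_subset_iff.2 hyF))
      (mem_union_right _ rfl)
  · simp [connectedComponentIn_eq_empty hxF]

lemma arc_comp_unbounded (φ : ℝ → ℂ) (hc : ContinuousOn φ (Icc 0 1))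
    (hi : InjOn φ (Icc 0 1)) {x : ℂ} (hx : x ∉ φ '' (Icc 0 1)) :
    ¬ IsBounded (connectedComponentIn (φ '' (Icc 0 1))ᶜ x) := by
  intro hb
  set Γ : Set ℂ := φ '' (Icc 0 1) with hΓ
  have hΓcomp : IsCompact Γ := isCompact_Icc.image_of_continuousOn hc
  have hΓclosed : IsClosed Γ := hΓcomp.isClosed
  set U : Set ℂ := connectedComponentIn Γᶜ x with hU
  have hxU : x ∈ U := mem_connectedComponentIn hx
  have hUopen : IsOpen U := hΓclosed.isOpen_compl.connectedComponentIn
  -- the homeomorphism onto the arc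
  have hmem : ∀ t : Icc (0:ℝ) 1, φ t ∈ Γ := fun t => mem_image_of_mem _ t.2
  let eqv : Icc (0:ℝ) 1 ≃ Γ := Equiv.ofBijective (fun t => ⟨φ t, hmem t⟩)
    ⟨fun s t hst => Subtype.ext (hi s.2 t.2 (congrArg Subtype.val hst)),
     by rintro ⟨y, t, ht, rfl⟩; exact ⟨⟨t, ht⟩, rfl⟩⟩
  have heqvcont : Continuous (fun t : Icc (0:ℝ) 1 => (⟨φ t, hmem t⟩ : Γ)) :=
    Continuous.subtype_mk (hc.restrict) _
  let homeo : Icc (0:ℝ) 1 ≃ₜ Γ := Continuous.homeoOfEquivCompactToT2 (f := eqv) heqvcont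
  -- Tietze extension of the inverse parametrization
  obtain ⟨F, hF⟩ := ContinuousMap.exists_restrict_eq (Y := ℝ) hΓclosed
    ⟨fun y => (homeo.symm y : ℝ), continuous_subtype_val.comp homeo.symm.continuous⟩
  have hFΓ : ∀ y (hy : y ∈ Γ), F y = (homeo.symm ⟨y, hy⟩ : ℝ) := fun y hy =>
    DFunLike.congr_fun hF ⟨y, hy⟩
  -- clamping
  set clamp : ℝ → ℝ := fun v => max 0 (min 1 v) with hclamp
  have hclampcont : Continuous clamp := continuous_const.max (continuous_const.min continuous_id)
  have hclampmem : ∀ v, clamp v ∈ Icc (0:ℝ) 1 :=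
    fun v => ⟨le_max_left _ _, max_le zero_le_one (min_le_left _ _)⟩
  have hclampid : ∀ v ∈ Icc (0:ℝ) 1, clamp v = v := fun v hv => by
    rw [hclamp]; simp only [min_eq_right hv.2, max_eq_right hv.1]
  -- retraction
  set r : ℂ → ℂ := fun w => φ (clamp (F w)) with hr
  have hrcont : Continuous r :=
    hc.comp_continuous (hclampcont.comp F.continuous) (fun w => hclampmem _)
  have hrΓ : ∀ w, r w ∈ Γ := fun w => mem_image_of_mem _ (hclampmem _)
  have hrfix : ∀ y ∈ Γ, r y = y := by
    intro y hy
    rw [hr]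
    simp only
    rw [hFΓ y hy, hclampid _ (homeo.symm ⟨y, hy⟩).2]
    have := homeo.apply_symm_apply ⟨y, hy⟩
    exact congrArg Subtype.val this
  -- radius
  obtain ⟨R, hR0, hRsub⟩ := (hb.closure.union hΓcomp.isBounded).subset_ball_lt 0 x
  -- the map f
  classical
  set f : ℂ → ℂ := fun w => if w ∈ closure U then r w else w with hf
  have hfrontier : ∀ w ∈ frontier (closure U), r w = w := by
    intro w hw
    have hw' : w ∈ frontier U := frontier_closure_subset hw
    rw [frontier, hUopen.interior_eq] at hw'
    have hwΓ : w ∈ Γ := by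
      by_contra hwc
      exact hw'.2 (closure_connectedComponentIn_inter ⟨hw'.1, hwc⟩)
    exact hrfix w hwΓ
  have hfcont : Continuous f := by
    rw [hf]
    apply continuous_if _ hrcont.continuousOn continuousOn_id
    intro a ha
    exact hfrontier a (by simpa using ha)
  have hfne : ∀ w, f w ≠ x := by
    intro w
    rw [hf]
    simp only
    split_ifs with hw
    · intro hrx; exact hx (hrx ▸ hrΓ w)
    · intro hwx; exact hw (hwx ▸ subset_closure hxU)
  have hfsphere : ∀ w ∈ sphere x R, f w = w := by
    intro w hw
    rw [hf]
    simp only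
    rw [if_neg]
    intro hwc
    have : w ∈ ball x R := hRsub (Or.inl hwc)
    rw [mem_ball, dist_comm] at this
    rw [mem_sphere, dist_comm] at hw
    exact absurd hw (ne_of_lt this)
  -- rescale and contradict
  have hRne : ((R:ℝ):ℂ) ≠ 0 := by
    exact_mod_cast ne_of_gt hR0
  apply no_id_extension (fun z => (f (x + R * z) - x) / R)
  · apply Continuous.continuousOn
    exact ((hfcont.comp (continuous_const.add (continuous_const.mul continuous_id))).sub
      continuous_const).div_const _
  · intro z _
    exact div_ne_zero (sub_ne_zero.2 (hfne _)) hRne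
  · intro z hz
    rw [mem_sphere_iff_norm, sub_zero] at hz
    have hmem : x + R * z ∈ sphere x R := by
      rw [mem_sphere, dist_eq_norm]
      simp only [add_sub_cancel_left]
      rw [norm_mul, hz, mul_one]
      rw [Complex.norm_real, Real.norm_eq_abs, abs_of_pos hR0]
    rw [hfsphere _ hmem]
    rw [add_sub_cancel_left]
    field_simp

lemma isPreconnected_compl_closedBall {E : Type*} [NormedAddCommGroup E] [NormedSpace ℝ E]
    (hrank : 1 < Module.rank ℝ E) (c : E) {R : ℝ} (hR : 0 ≤ R) :
    IsPreconnected (closedBall c R)ᶜ := by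
  have himg : (fun p : E × ℝ => c + p.2 • p.1) '' ((sphere (0:E) 1) ×ˢ (Ioi R))
      = (closedBall c R)ᶜ := by
    apply Set.Subset.antisymm
    · rintro _ ⟨⟨s, t⟩, ⟨hs, ht⟩, rfl⟩
      simp only [mem_compl_iff, mem_closedBall, not_le, dist_eq_norm]
      simp only [add_sub_cancel_left, norm_smul]
      rw [mem_sphere_iff_norm, sub_zero] at hs
      rw [hs, mul_one, Real.norm_eq_abs, abs_of_pos (lt_of_le_of_lt hR ht)]
      exact ht
    · intro z hz
      rw [mem_compl_iff, mem_closedBall, not_le, dist_eq_norm] at hz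
      have hzc : ‖z - c‖ ≠ 0 := ne_of_gt (lt_of_le_of_lt hR hz)
      refine ⟨⟨‖z - c‖⁻¹ • (z - c), ‖z - c‖⟩, ⟨?_, hz⟩, ?_⟩
      · rw [mem_sphere_iff_norm, sub_zero, norm_smul, norm_inv, Real.norm_eq_abs,
          _root_.abs_of_nonneg (norm_nonneg _), inv_mul_cancel₀ hzc]
      · simp only [smul_smul]
        rw [mul_inv_cancel₀ hzc, one_smul]
        abel
  rw [← himg]
  apply IsPreconnected.image
  · exact (isPreconnected_sphere hrank 0 1).prod isPreconnected_Ioi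
  · exact (continuous_const.add (continuous_snd.smul continuous_fst)).continuousOn

lemma arc_comp_unbounded' (γ : ℝ → ℝ × ℝ) (hc : ContinuousOn γ (Icc 0 1))
    (hi : InjOn γ (Icc 0 1)) {x : ℝ × ℝ} (hx : x ∉ γ '' (Icc 0 1)) :
    ¬ IsBounded (connectedComponentIn (γ '' (Icc 0 1))ᶜ x) := by
  intro hb
  set ι : ℂ ≃ₜ ℝ × ℝ := Complex.equivRealProdCLM.toHomeomorph with hι
  set φ : ℝ → ℂ := fun t => ι.symm (γ t) with hφ
  have hcφ : ContinuousOn φ (Icc 0 1) := ι.symm.continuous.comp_continuousOn hc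
  have hiφ : InjOn φ (Icc 0 1) := fun s hs t ht hst =>
    hi hs ht (ι.symm.injective hst)
  have himg : ι '' (φ '' (Icc 0 1)) = γ '' (Icc 0 1) := by
    rw [hφ, ← image_comp]
    apply Set.image_congr
    intro t _
    exact ι.apply_symm_apply _
  have hx' : ι.symm x ∉ φ '' (Icc 0 1) := by
    intro hmem
    apply hx
    rw [← himg]
    exact ⟨_, hmem, ι.apply_symm_apply x⟩
  apply arc_comp_unbounded φ hcφ hiφ hx'
  have hcc := ι.image_connectedComponentIn (s := (φ '' (Icc 0 1))ᶜ) (x := ι.symm x) hx'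
  rw [ι.apply_symm_apply] at hcc
  have hcompl : ι '' (φ '' (Icc 0 1))ᶜ = (γ '' (Icc 0 1))ᶜ := by
    rw [← himg]
    exact ι.toEquiv.image_compl _
  rw [hcompl] at hcc
  have : connectedComponentIn (φ '' (Icc 0 1))ᶜ (ι.symm x)
      = ι.symm '' (connectedComponentIn (γ '' (Icc 0 1))ᶜ x) := by
    rw [← hcc, ← image_comp]
    simp
  rw [this]
  exact (Complex.equivRealProdCLM.symm.toContinuousLinearMap.lipschitz).isBounded_image hb

lemma arc_compl_preconnected (γ : ℝ → ℝ × ℝ) (hc : ContinuousOn γ (Icc 0 1))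
    (hi : InjOn γ (Icc 0 1)) : IsPreconnected (γ '' (Icc 0 1))ᶜ := by
  set Γ : Set (ℝ × ℝ) := γ '' (Icc 0 1) with hΓ
  have hΓb : IsBounded Γ := (isCompact_Icc.image_of_continuousOn hc).isBounded
  obtain ⟨R, hR0, hRsub⟩ := hΓb.subset_ball_lt 0 0
  set O : Set (ℝ × ℝ) := (closedBall 0 R)ᶜ with hO
  have hOpre : IsPreconnected O := isPreconnected_compl_closedBall
    (by rw [rank_prod', Module.rank_self]; norm_num) 0 hR0.le
  have hOsub : O ⊆ Γᶜ := fun z hz hzΓ => hz (ball_subset_closedBall (hRsub hzΓ))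
  set z₀ : ℝ × ℝ := (R + 1, 0) with hz₀
  have hz₀O : z₀ ∈ O := by
    simp only [hO, mem_compl_iff, mem_closedBall, dist_zero_right, not_le, Prod.norm_def, hz₀]
    simp [abs_of_pos (by linarith : (0:ℝ) < R + 1)]
  have hOcomp : ∀ y ∈ Γᶜ, O ⊆ connectedComponentIn Γᶜ y := by
    intro y hy
    have hub := arc_comp_unbounded' γ hc hi hy
    have : ∃ z ∈ connectedComponentIn Γᶜ y, z ∉ closedBall (0 : ℝ × ℝ) R := by
      by_contra hcon
      push_neg at hcon
      exact hub ((isBounded_closedBall).subset hcon)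
    obtain ⟨z, hz, hzO⟩ := this
    rw [connectedComponentIn_eq hz]
    exact hOpre.subset_connectedComponentIn hzO hOsub
  have hcover : Γᶜ = ⋃₀ ((fun y => connectedComponentIn Γᶜ y) '' Γᶜ) := by
    apply Set.Subset.antisymm
    · intro y hy
      exact ⟨_, ⟨y, hy, rfl⟩, mem_connectedComponentIn hy⟩
    · rintro z ⟨_, ⟨y, hy, rfl⟩, hz⟩
      exact connectedComponentIn_subset _ _ hz
  rw [hcover]
  apply isPreconnected_sUnion z₀
  · rintro s ⟨y, hy, rfl⟩
    exact hOcomp y hy hz₀O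
  · rintro s ⟨y, hy, rfl⟩
    exact isPreconnected_connectedComponentIn

lemma unbounded_of_compl_closedBall_subset {R : ℝ} {V : Set (ℝ × ℝ)}
    (h : (closedBall (0:ℝ×ℝ) R)ᶜ ⊆ V) : ¬ IsBounded V := by
  intro hb
  obtain ⟨M, hM⟩ := (isBounded_iff_forall_norm_le).1 hb
  set T : ℝ := max M R + 1 with hT
  have hTM : M < T := by have := le_max_left M R; linarith
  have hTR : R < T := by have := le_max_right M R; linarith
  have hzV : ((T, 0) : ℝ × ℝ) ∈ V := by
    apply h
    simp only [mem_compl_iff, mem_closedBall, dist_zero_right, not_le, Prod.norm_def]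
    simp only [norm_zero, Real.norm_eq_abs]
    exact lt_of_lt_of_le hTR (le_trans (le_abs_self T) (le_max_left _ _))
  have hle := hM _ hzV
  rw [Prod.norm_def] at hle
  simp only [norm_zero, Real.norm_eq_abs] at hle
  have : T ≤ M := le_trans (le_trans (le_abs_self T) (le_max_left _ _)) hle
  linarith


/-- The interior of a Jordan curve `S`: the union of the bounded connected components
of the complement, i.e. a point lies in the interior iff it is off `S` and its
connected component in the complement is bounded. -/
def jordanInterior (S : Set (ℝ × ℝ)) : Set (ℝ × ℝ) :=
  {x | x ∉ S ∧ Bornology.IsBounded (connectedComponentIn Sᶜ x)}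

theorem stmt0
    (A B C : ℝ → ℝ × ℝ) (a b : ℝ × ℝ) (hab : a ≠ b)
    (hAc : ContinuousOn A (Icc 0 1)) (hBc : ContinuousOn B (Icc 0 1))
    (hCc : ContinuousOn C (Icc 0 1))
    (hAi : InjOn A (Icc 0 1)) (hBi : InjOn B (Icc 0 1)) (hCi : InjOn C (Icc 0 1))
    (hA0 : A 0 = a) (hB0 : B 0 = a) (hC0 : C 0 = a)
    (hA1 : A 1 = b) (hB1 : B 1 = b) (hC1 : C 1 = b)
    (hAB : A '' (Icc 0 1) ∩ B '' (Icc 0 1) = {a, b})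
    (hAC : A '' (Icc 0 1) ∩ C '' (Icc 0 1) = {a, b})
    (hBC : B '' (Icc 0 1) ∩ C '' (Icc 0 1) = {a, b})
    (hCin : C '' (Icc 0 1) \ {a, b} ⊆ jordanInterior (A '' (Icc 0 1) ∪ B '' (Icc 0 1))) :
    jordanInterior (B '' (Icc 0 1) ∪ C '' (Icc 0 1)) ⊆
      jordanInterior (A '' (Icc 0 1) ∪ B '' (Icc 0 1)) := by
  intro x hxmem
  obtain ⟨hxBC, hK⟩ := hxmem
  set 𝔸 : Set (ℝ × ℝ) := A '' (Icc 0 1) with h𝔸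
  set 𝔹 : Set (ℝ × ℝ) := B '' (Icc 0 1) with h𝔹
  set ℭ : Set (ℝ × ℝ) := C '' (Icc 0 1) with hℭ
  have h01 : (0:ℝ) ∈ Icc (0:ℝ) 1 := ⟨le_refl 0, zero_le_one⟩
  have h11 : (1:ℝ) ∈ Icc (0:ℝ) 1 := ⟨zero_le_one, le_refl 1⟩
  have ha𝔸 : a ∈ 𝔸 := ⟨0, h01, hA0⟩
  have hb𝔸 : b ∈ 𝔸 := ⟨1, h11, hA1⟩
  have ha𝔹 : a ∈ 𝔹 := ⟨0, h01, hB0⟩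
  have hb𝔹 : b ∈ 𝔹 := ⟨1, h11, hB1⟩
  have haℭ : a ∈ ℭ := ⟨0, h01, hC0⟩
  have hbℭ : b ∈ ℭ := ⟨1, h11, hC1⟩
  have hcompA : IsCompact 𝔸 := isCompact_Icc.image_of_continuousOn hAc
  have hcompB : IsCompact 𝔹 := isCompact_Icc.image_of_continuousOn hBc
  have hcompC : IsCompact ℭ := isCompact_Icc.image_of_continuousOn hCc
  have hSBCclosed : IsClosed (𝔹 ∪ ℭ) := hcompB.isClosed.union hcompC.isClosed
  set K : Set (ℝ × ℝ) := connectedComponentIn (𝔹 ∪ ℭ)ᶜ x with hKdef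
  have hxK : x ∈ K := mem_connectedComponentIn hxBC
  -- hCin rephrased
  have hCin' : ∀ y, y ∈ ℭ → y ∉ 𝔸 ∪ 𝔹 → IsBounded (connectedComponentIn (𝔸 ∪ 𝔹)ᶜ y) := by
    intro y hyC hyAB
    have hya : y ≠ a := fun h => hyAB (Or.inl (h ▸ ha𝔸))
    have hyb : y ≠ b := fun h => hyAB (Or.inl (h ▸ hb𝔸))
    have := hCin ⟨hyC, by simp [hya, hyb]⟩
    exact this.2
  -- radius covering everything
  have hbig : IsBounded (𝔸 ∪ 𝔹 ∪ ℭ ∪ K) :=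
    ((hcompA.isBounded.union hcompB.isBounded).union hcompC.isBounded).union hK
  obtain ⟨R, hR0, hRsub⟩ := hbig.subset_ball_lt 0 0
  set O : Set (ℝ × ℝ) := (closedBall 0 R)ᶜ with hO
  have hOpre : IsPreconnected O := isPreconnected_compl_closedBall
    (by rw [rank_prod', Module.rank_self]; norm_num) 0 hR0.le
  have hOsub : ∀ s, s ⊆ 𝔸 ∪ 𝔹 ∪ ℭ ∪ K → O ⊆ sᶜ := by
    intro s hs z hz hzs
    exact hz (ball_subset_closedBall (hRsub (hs hzs)))
  set p : ℝ × ℝ := (R + 1, 0) with hp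
  have hpO : p ∈ O := by
    simp only [hO, mem_compl_iff, mem_closedBall, dist_zero_right, not_le, Prod.norm_def, hp]
    simp [abs_of_pos (by linarith : (0:ℝ) < R + 1)]
  have hOSBC : O ⊆ (𝔹 ∪ ℭ)ᶜ := by
    apply hOsub
    intro z hz
    rcases hz with h | h
    · exact Or.inl (Or.inl (Or.inr h))
    · exact Or.inl (Or.inr h)
  have hpSBC : p ∈ (𝔹 ∪ ℭ)ᶜ := hOSBC hpO
  -- step 1 : x ∉ 𝔸
  have hx𝔸 : x ∉ 𝔸 := by
    intro hxA
    have hxa : x ≠ a := fun h => hxBC (Or.inl (h ▸ ha𝔹))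
    have hxb : x ≠ b := fun h => hxBC (Or.inl (h ▸ hb𝔹))
    set P : Set (ℝ × ℝ) := A '' (Ioo 0 1) with hP
    have hPab : ∀ y ∈ P, y ≠ a ∧ y ≠ b := by
      rintro _ ⟨t, ht, rfl⟩
      constructor
      · intro h
        have := hAi (Ioo_subset_Icc_self ht) h01 (h.trans hA0.symm)
        exact (ne_of_gt ht.1) this
      · intro h
        have := hAi (Ioo_subset_Icc_self ht) h11 (h.trans hA1.symm)
        exact (ne_of_lt ht.2) this
    have hP𝔸 : P ⊆ 𝔸 := image_mono Ioo_subset_Icc_self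
    have hPSBC : P ⊆ (𝔹 ∪ ℭ)ᶜ := by
      intro y hy
      obtain ⟨hya, hyb⟩ := hPab y hy
      rintro (h | h)
      · have : y ∈ ({a, b} : Set (ℝ × ℝ)) := hAB ▸ ⟨hP𝔸 hy, h⟩
        rcases this with h' | h' <;> [exact hya h'; exact hyb h']
      · have : y ∈ ({a, b} : Set (ℝ × ℝ)) := hAC ▸ ⟨hP𝔸 hy, h⟩
        rcases this with h' | h' <;> [exact hya h'; exact hyb h']
    have hxP : x ∈ P := by
      obtain ⟨t, ht, rfl⟩ := hxA
      refine ⟨t, ⟨?_, ?_⟩, rfl⟩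
      · rcases lt_or_eq_of_le ht.1 with h | h
        · exact h
        · exact absurd (h ▸ hA0 : A t = a) hxa
      · rcases lt_or_eq_of_le ht.2 with h | h
        · exact h
        · exact absurd ((h ▸ hA1) : A t = b) hxb
    have hPpre : IsPreconnected P := isPreconnected_Ioo.image A (hAc.mono Ioo_subset_Icc_self)
    have hPK : P ⊆ K := hPpre.subset_connectedComponentIn hxP hPSBC
    -- the unbounded component V
    set V : Set (ℝ × ℝ) := connectedComponentIn (𝔹 ∪ ℭ)ᶜ p with hV
    have hpV : p ∈ V := mem_connectedComponentIn hpSBC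
    have hOV : O ⊆ V := hOpre.subset_connectedComponentIn hpO hOSBC
    have hVunb : ¬ IsBounded V := unbounded_of_compl_closedBall_subset hOV
    have hVK : ∀ y, y ∈ V → y ∉ K := by
      intro y hyV hyK
      apply hVunb
      rw [hV, connectedComponentIn_eq hyV]
      rw [hKdef] at hyK
      rw [← connectedComponentIn_eq hyK]
      exact hK
    have hV𝔸 : ∀ y, y ∈ V → y ∉ 𝔸 := by
      intro y hyV hyA
      have hySBC : y ∈ (𝔹 ∪ ℭ)ᶜ := connectedComponentIn_subset _ _ hyV
      obtain ⟨t, ht, rfl⟩ := hyA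
      have hya : A t ≠ a := fun h => hySBC (Or.inl (h ▸ ha𝔹))
      have hyb : A t ≠ b := fun h => hySBC (Or.inl (h ▸ hb𝔹))
      have : A t ∈ P := by
        refine ⟨t, ⟨?_, ?_⟩, rfl⟩
        · rcases lt_or_eq_of_le ht.1 with h | h
          · exact h
          · exact absurd (h ▸ hA0 : A t = a) hya
        · rcases lt_or_eq_of_le ht.2 with h | h
          · exact h
          · exact absurd ((h ▸ hA1) : A t = b) hyb
      exact hVK _ hyV (hPK this)
    have hVSAB : V ⊆ (𝔸 ∪ 𝔹)ᶜ := by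
      intro y hyV
      rintro (h | h)
      · exact hV𝔸 y hyV h
      · exact (connectedComponentIn_subset _ _ hyV) (Or.inl h)
    set V' : Set (ℝ × ℝ) := connectedComponentIn (𝔸 ∪ 𝔹)ᶜ p with hV'
    have hpSAB : p ∈ (𝔸 ∪ 𝔹)ᶜ := hVSAB hpV
    have hVV' : V ⊆ V' := isPreconnected_connectedComponentIn.subset_connectedComponentIn hpV hVSAB
    have hV'unb : ¬ IsBounded V' := unbounded_of_compl_closedBall_subset (hOV.trans hVV')
    have hV'ℭ : ∀ y, y ∈ V' → y ∉ ℭ := by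
      intro y hyV' hyC
      have hySAB : y ∈ (𝔸 ∪ 𝔹)ᶜ := connectedComponentIn_subset _ _ hyV'
      apply hV'unb
      rw [hV', connectedComponentIn_eq hyV']
      exact hCin' y hyC hySAB
    have hV'SBC : V' ⊆ (𝔹 ∪ ℭ)ᶜ := by
      intro y hyV'
      rintro (h | h)
      · exact (connectedComponentIn_subset _ _ hyV') (Or.inr h)
      · exact hV'ℭ y hyV' h
    have hV'V : V' ⊆ V :=
      isPreconnected_connectedComponentIn.subset_connectedComponentIn
        (mem_connectedComponentIn hpSAB) hV'SBC
    have hVeq : V = V' := Subset.antisymm hVV' hV'V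
    -- frontier of V is inside 𝔹
    have hfront : ∀ y, y ∈ closure V → y ∉ V → y ∈ 𝔹 := by
      intro y hyc hyV
      have hySBC : y ∉ (𝔹 ∪ ℭ)ᶜ := fun h =>
        hyV (closure_connectedComponentIn_inter ⟨hyc, h⟩)
      have hySAB : y ∉ (𝔸 ∪ 𝔹)ᶜ := fun h => by
        rw [hVeq] at hyc hyV
        exact hyV (closure_connectedComponentIn_inter ⟨hyc, h⟩)
      simp only [mem_compl_iff, not_not] at hySBC hySAB
      rcases hySBC with h | h
      · exact h
      · rcases hySAB with h' | h'
        · have : y ∈ ({a, b} : Set (ℝ × ℝ)) := hAC ▸ ⟨h', h⟩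
          rcases this with h'' | h'' <;> [exact h'' ▸ ha𝔹; exact h'' ▸ hb𝔹]
        · exact h'
    -- contradiction with connectedness of 𝔹ᶜ
    have hpc := arc_compl_preconnected B hBc hBi
    have hVopen : IsOpen V := hSBCclosed.isOpen_compl.connectedComponentIn
    rw [← h𝔹] at hpc
    obtain ⟨z, hz⟩ := hpc V (closure V)ᶜ hVopen isClosed_closure.isOpen_compl
      (by intro y hy
          by_cases h : y ∈ closure V
          · by_cases h' : y ∈ V
            · exact Or.inl h'
            · exact absurd (hfront y h h') hy
          · exact Or.inr h)
      ⟨p, fun h => hpSBC (Or.inl h), hpV⟩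
      ⟨x, fun h => hxBC (Or.inl h), by
        intro hxc
        have : x ∈ (𝔹 ∪ ℭ)ᶜ := fun h => hxBC h
        exact hVK x (closure_connectedComponentIn_inter ⟨hxc, this⟩) hxK⟩
    exact hz.2.2 (subset_closure hz.2.1)
  -- step 2
  have hxSAB : x ∉ 𝔸 ∪ 𝔹 := by
    rintro (h | h)
    · exact hx𝔸 h
    · exact hxBC (Or.inl h)
  refine ⟨hxSAB, ?_⟩
  by_contra hWunb
  set W : Set (ℝ × ℝ) := connectedComponentIn (𝔸 ∪ 𝔹)ᶜ x with hW
  have hWℭ : ∀ y, y ∈ W → y ∉ ℭ := by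
    intro y hyW hyC
    have hySAB : y ∈ (𝔸 ∪ 𝔹)ᶜ := connectedComponentIn_subset _ _ hyW
    apply hWunb
    rw [hW, connectedComponentIn_eq hyW]
    exact hCin' y hyC hySAB
  have hWSBC : W ⊆ (𝔹 ∪ ℭ)ᶜ := by
    intro y hyW
    rintro (h | h)
    · exact (connectedComponentIn_subset _ _ hyW) (Or.inr h)
    · exact hWℭ y hyW h
  have hWK : W ⊆ K :=
    isPreconnected_connectedComponentIn.subset_connectedComponentIn
      (mem_connectedComponentIn hxSAB) hWSBC
  exact hWunb (hK.subset hWK)
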